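/- Let n ≥ 1 and i ≥ 1. Let c be an invertible symmetric n×n real matrix, a an arbitrary n×n real matrix, x a symmetric n×n real matrix, and g ∈ GL(n,ℝ) with det g > 0. Put (c', a') = Ad*(x,g)(c,a) = ((gᵀ)⁻¹ c g⁻¹, g a g⁻¹ + x (gᵀ)⁻¹ c g⁻¹). Then c' is invertible and tr( (c' a' c'⁻¹ − a'ᵀ)^{2i} ) = tr( (c a c⁻¹ − aᵀ)^{2i} ), i.e. the functions fᵢ(c,a) = (1/2^{2i}) tr((c a c⁻¹ − aᵀ)^{2i}) are invariant under the coadjoint action. -/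

import Mathlib

open Matrix

theorem trace_power_invariant (n i : ℕ) (hn : 1 ≤ n) (hi : 1 ≤ i)
    (c a x g : Matrix (Fin n) (Fin n) ℝ)
    (hc : c.IsSymm) (hcu : IsUnit c.det) (hx : x.IsSymm) (hg : 0 < g.det) :
    IsUnit ((gᵀ)⁻¹ * c * g⁻¹).det ∧
    ((((gᵀ)⁻¹ * c * g⁻¹) * (g * a * g⁻¹ + x * ((gᵀ)⁻¹ * c * g⁻¹)) *
        ((gᵀ)⁻¹ * c * g⁻¹)⁻¹ -
        (g * a * g⁻¹ + x * ((gᵀ)⁻¹ * c * g⁻¹))ᵀ) ^ (2 * i)).trace =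
      ((c * a * c⁻¹ - aᵀ) ^ (2 * i)).trace := by
  have hgu : IsUnit g.det := isUnit_iff_ne_zero.mpr hg.ne'
  have hgtu : IsUnit gᵀ.det := by rwa [Matrix.det_transpose]
  have hgti : IsUnit (gᵀ)⁻¹.det := by
    rwa [Matrix.det_nonsing_inv, isUnit_ringInverse]
  have hgi : IsUnit g⁻¹.det := by
    rwa [Matrix.det_nonsing_inv, isUnit_ringInverse]
  have hdet : IsUnit ((gᵀ)⁻¹ * c * g⁻¹).det := by
    rw [Matrix.det_mul, Matrix.det_mul]
    exact (hgti.mul hcu).mul hgi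
  refine ⟨hdet, ?_⟩
  haveI := c.invertibleOfIsUnitDet hcu
  haveI := g.invertibleOfIsUnitDet hgu
  haveI := gᵀ.invertibleOfIsUnitDet hgtu
  have hinv : ((gᵀ)⁻¹ * c * g⁻¹)⁻¹ = g * c⁻¹ * gᵀ := by
    rw [Matrix.mul_inv_rev, Matrix.mul_inv_rev,
      Matrix.nonsing_inv_nonsing_inv _ hgu, Matrix.nonsing_inv_nonsing_inv _ hgtu,
      Matrix.mul_assoc]
  have key : (((gᵀ)⁻¹ * c * g⁻¹) * (g * a * g⁻¹ + x * ((gᵀ)⁻¹ * c * g⁻¹)) *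
        ((gᵀ)⁻¹ * c * g⁻¹)⁻¹ -
        (g * a * g⁻¹ + x * ((gᵀ)⁻¹ * c * g⁻¹))ᵀ)
      = (gᵀ)⁻¹ * (c * a * c⁻¹ - aᵀ) * gᵀ := by
    rw [hinv]
    rw [Matrix.transpose_add, Matrix.transpose_mul, Matrix.transpose_mul,
      Matrix.transpose_mul, Matrix.transpose_mul, Matrix.transpose_mul,
      hc.eq, hx.eq, Matrix.transpose_nonsing_inv, Matrix.transpose_nonsing_inv,
      Matrix.transpose_transpose]
    rw [← Matrix.invOf_eq_nonsing_inv c, ← Matrix.invOf_eq_nonsing_inv g,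
      ← Matrix.invOf_eq_nonsing_inv gᵀ]
    simp only [Matrix.mul_add, Matrix.add_mul, Matrix.sub_mul, Matrix.mul_sub,
      Matrix.mul_assoc, invOf_mul_cancel_left, mul_invOf_cancel_left,
      invOf_mul_self, mul_invOf_self, Matrix.mul_one]
    abel
  rw [key]
  have conjpow : ((gᵀ)⁻¹ * (c * a * c⁻¹ - aᵀ) * gᵀ) ^ (2 * i)
      = (gᵀ)⁻¹ * (c * a * c⁻¹ - aᵀ) ^ (2 * i) * gᵀ := by
    rw [← Matrix.invOf_eq_nonsing_inv gᵀ]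
    induction (2 * i) with
    | zero => simp
    | succ k ih =>
        rw [pow_succ, pow_succ, ih]
        simp only [Matrix.mul_assoc, mul_invOf_cancel_left]
  rw [conjpow, Matrix.trace_mul_comm, ← Matrix.mul_assoc,
    Matrix.mul_nonsing_inv _ hgtu, Matrix.one_mul]
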